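/- arXiv:1607.08453 — 3 statements merged into one kernel-verified Lean document; each statement's English description precedes it below -/
import Mathlib

section
/- If f is a b-homomorphism from H to F, then the map g defined by g((u,v)) = (u, f(v)) is a b-homomorphism from the Cartesian product G □ H to G □ F. -/
/-- Cartesian (box) product of simple graphs. -/
def cartProd {α β : Type*} (G : SimpleGraph α) (H : SimpleGraph β) : SimpleGraph (α × β) where
  Adj a b := (a.1 = b.1 ∧ H.Adj a.2 b.2) ∨ (G.Adj a.1 b.1 ∧ a.2 = b.2)
  symm := ⟨by
    rintro a b (⟨h1, h2⟩ | ⟨h1, h2⟩)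
    · exact Or.inl ⟨h1.symm, h2.symm⟩
    · exact Or.inr ⟨h1.symm, h2.symm⟩⟩
  loopless := ⟨by rintro a (⟨-, h⟩ | ⟨h, -⟩) <;> exact h.ne rfl⟩

/-- A graph homomorphism as a property of a map. -/
def IsHom {α β : Type*} (G : SimpleGraph α) (H : SimpleGraph β) (f : α → β) : Prop :=
  ∀ ⦃a b⦄, G.Adj a b → H.Adj (f a) (f b)

/-- A b-homomorphism. -/
def IsBHom {α β : Type*} (G : SimpleGraph α) (H : SimpleGraph β) (f : α → β) : Prop :=
  IsHom G H f ∧ ∀ u : β, ∃ u', f u' = u ∧ f '' (G.neighborSet u') = H.neighborSet u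

theorem stmt5 {α β γ : Type*} (G : SimpleGraph α) (H : SimpleGraph β) (F : SimpleGraph γ)
    (f : β → γ) (hf : IsBHom H F f) :
    IsBHom (cartProd G H) (cartProd G F) (fun x => (x.1, f x.2)) := by
  obtain ⟨hhom, hb⟩ := hf
  constructor
  · rintro ⟨a, v⟩ ⟨b, w⟩ (⟨h1, h2⟩ | ⟨h1, h2⟩)
    · exact Or.inl ⟨h1, hhom h2⟩
    · exact Or.inr ⟨h1, by simp_all⟩
  · rintro ⟨a, c⟩
    obtain ⟨v, hv, hN⟩ := hb c
    refine ⟨(a, v), by simp [hv], ?_⟩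
    ext ⟨b, d⟩
    simp only [Set.mem_image, SimpleGraph.mem_neighborSet, cartProd, Prod.mk.injEq,
      Prod.exists]
    constructor
    · rintro ⟨x, y, (⟨h1, h2⟩ | ⟨h1, h2⟩), hx, hy⟩
      · refine Or.inl ⟨by simp_all, ?_⟩
        subst hy hx hv
        have : f y ∈ f '' (H.neighborSet v) := ⟨y, h2, rfl⟩
        rw [hN] at this; exact this
      · exact Or.inr ⟨by simp_all, by simp_all [hv]⟩
    · rintro (⟨h1, h2⟩ | ⟨h1, h2⟩)
      · have : d ∈ f '' (H.neighborSet v) := by rw [hN]; exact h2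
        obtain ⟨y, hy, hfy⟩ := this
        exact ⟨a, y, Or.inl ⟨rfl, hy⟩, h1, hfy⟩
      · exact ⟨b, v, Or.inr ⟨h1, rfl⟩, rfl, h2 ▸ hv⟩
end

section
/- If f is a surjective domatic homomorphism from H to F, then the map g defined by g((u,v)) = (u, f(v)) is a surjective domatic homomorphism from the direct product G × H to G × F. -/
/-- Direct (tensor) product of simple graphs. -/
def tensorProd {α β : Type*} (G : SimpleGraph α) (H : SimpleGraph β) : SimpleGraph (α × β) where
  Adj a b := G.Adj a.1 b.1 ∧ H.Adj a.2 b.2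
  symm := by constructor; rintro a b ⟨h1, h2⟩; exact ⟨h1.symm, h2.symm⟩
  loopless := by constructor; rintro a ⟨h, -⟩; exact h.ne rfl

/-- A domatic homomorphism. -/
def IsDomatic {α β : Type*} (G : SimpleGraph α) (H : SimpleGraph β) (f : α → β) : Prop :=
  ∀ ⦃u' v'⦄, H.Adj u' v' → ∀ u, f u = u' → ∃ v, f v = v' ∧ G.Adj u v

theorem stmt8 {α β γ : Type*} (G : SimpleGraph α) (H : SimpleGraph β) (F : SimpleGraph γ)
    (f : β → γ) (hf : IsDomatic H F f) (hsurj : Function.Surjective f) :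
    IsDomatic (tensorProd G H) (tensorProd G F) (fun x => (x.1, f x.2)) ∧
      Function.Surjective (fun x : α × β => (x.1, f x.2)) := by
  constructor
  · rintro ⟨a1, c1⟩ ⟨a2, c2⟩ ⟨hG, hF⟩ ⟨a, b⟩ heq
    simp only [Prod.mk.injEq] at heq
    obtain ⟨ha, hb⟩ := heq
    obtain ⟨v, hv, hadj⟩ := hf hF b hb
    exact ⟨(a2, v), by simp [hv], ⟨ha ▸ hG, hadj⟩⟩
  · rintro ⟨a, c⟩
    obtain ⟨b, hb⟩ := hsurj c
    exact ⟨(a, b), by simp [hb]⟩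
end

section
/- For positive integers p ≤ q, the Cartesian product K_p □ K_q admits a fall-coloring with q colors. -/
/-- A fall-coloring with `k` colors: a proper coloring in which every vertex is a b-vertex. -/
def IsFallColoring {α : Type*} (G : SimpleGraph α) (k : ℕ) (f : α → Fin k) : Prop :=
  (∀ ⦃a b⦄, G.Adj a b → f a ≠ f b) ∧
  ∀ a : α, ∀ c : Fin k, c ≠ f a → ∃ b, G.Adj a b ∧ f b = c

theorem stmt13 (p q : ℕ) (hp : 0 < p) (hpq : p ≤ q) :
    ∃ f : Fin p × Fin q → Fin q,
      IsFallColoring (cartProd (⊤ : SimpleGraph (Fin p)) (⊤ : SimpleGraph (Fin q))) q f := by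
  have hq : 0 < q := lt_of_lt_of_le hp hpq
  haveI : NeZero q := ⟨hq.ne'⟩
  refine ⟨fun a => Fin.castLE hpq a.1 + a.2, ?_, ?_⟩
  · rintro ⟨i, j⟩ ⟨i', j'⟩ (⟨h1, h2⟩ | ⟨h1, h2⟩) heq
    · simp only at h1 h2 heq
      subst h1
      exact h2.ne (add_left_cancel heq)
    · simp only at h1 h2 heq
      subst h2
      exact h1.ne (Fin.castLE_injective hpq (add_right_cancel heq))
  · rintro ⟨i, j⟩ c hc
    refine ⟨(i, c - Fin.castLE hpq i), Or.inl ⟨rfl, ?_⟩, by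
      simp [add_sub_cancel]⟩
    simp only [SimpleGraph.top_adj]
    intro h
    apply hc
    simp only
    rw [h]
    simp [add_sub_cancel]
end
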